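/- Let a ∈ ℝ, let I ⊆ ℝ be an interval containing 0, and let y, z : ℝ → ℝ be twice differentiable on I with y''(s) = (1 − 2·y(s)² − 8·z(s)²)·y(s), z''(s) = (4 − 2·y(s)² − 8·z(s)²)·z(s) on I, and y(0) = 0, y'(0) = 2a, z(0) = a, z'(0) = 0. Then for every s ∈ I: (y(s)·y'(s) + z(s)·z'(s))² + (1 − y(s)² − z(s)²)·(y'(s)² + z'(s)²) = (1 − y(s)² − z(s)²)·(y(s)² + 4·z(s)²). -/

import Mathlib

/-- **Coordinate-free form of the conformal-factor relation.**
If `y, z` solve the EGJ system on an interval `I ∋ 0` with `y(0) = 0`, `y'(0) = 2a`,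
`z(0) = a`, `z'(0) = 0`, then for every `s ∈ I`,
`(yy' + zz')² + (1 − y² − z²)((y')² + (z')²) = (1 − y² − z²)(y² + 4z²)`. -/
theorem egj_conformal_factor_identity
    (a : ℝ) (I : Set ℝ) (hI : I.OrdConnected) (h0 : (0 : ℝ) ∈ I)
    (y z y' z' y'' z'' : ℝ → ℝ)
    (hy : ∀ s ∈ I, HasDerivAt y (y' s) s)
    (hy' : ∀ s ∈ I, HasDerivAt y' (y'' s) s)
    (hz : ∀ s ∈ I, HasDerivAt z (z' s) s)
    (hz' : ∀ s ∈ I, HasDerivAt z' (z'' s) s)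
    (hODEy : ∀ s ∈ I, y'' s = (1 - 2 * (y s) ^ 2 - 8 * (z s) ^ 2) * y s)
    (hODEz : ∀ s ∈ I, z'' s = (4 - 2 * (y s) ^ 2 - 8 * (z s) ^ 2) * z s)
    (hy0 : y 0 = 0) (hy'0 : y' 0 = 2 * a) (hz0 : z 0 = a) (hz'0 : z' 0 = 0) :
    ∀ s ∈ I,
      (y s * y' s + z s * z' s) ^ 2
        + (1 - (y s) ^ 2 - (z s) ^ 2) * ((y' s) ^ 2 + (z' s) ^ 2)
      = (1 - (y s) ^ 2 - (z s) ^ 2) * ((y s) ^ 2 + 4 * (z s) ^ 2) := by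
  set F : ℝ → ℝ := fun t =>
    (y t * y' t + z t * z' t) ^ 2
      + (1 - (y t) ^ 2 - (z t) ^ 2) * ((y' t) ^ 2 + (z' t) ^ 2)
      - (1 - (y t) ^ 2 - (z t) ^ 2) * ((y t) ^ 2 + 4 * (z t) ^ 2) with hF
  have key : ∀ s ∈ I, HasDerivAt F 0 s := by
    intro s hs
    have Hy := hy s hs
    have Hy' := hy' s hs
    have Hz := hz s hs
    have Hz' := hz' s hs
    have H :=
      ((((Hy.mul Hy').add (Hz.mul Hz')).pow 2).add
        ((((hasDerivAt_const s (1 : ℝ)).sub (Hy.pow 2)).sub (Hz.pow 2)).mul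
          ((Hy'.pow 2).add (Hz'.pow 2)))).sub
        ((((hasDerivAt_const s (1 : ℝ)).sub (Hy.pow 2)).sub (Hz.pow 2)).mul
          ((Hy.pow 2).add ((hasDerivAt_const s (4 : ℝ)).mul (Hz.pow 2))))
    refine HasDerivAt.congr_deriv H ?_
    rw [hODEy s hs, hODEz s hs]
    simp only [Pi.add_apply, Pi.mul_apply, Pi.pow_apply, Pi.sub_apply]
    ring
  have hconv : Convex ℝ I := hI.convex
  have hconst : ∀ s ∈ I, F s = F 0 := by
    intro s hs
    have hb := hconv.norm_image_sub_le_of_norm_hasFDerivWithin_le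
      (f := F) (f' := fun _ => (0 : ℝ →L[ℝ] ℝ)) (C := 0)
      (fun x hx => by
        have e : ((1 : ℝ →L[ℝ] ℝ).smulRight (0 : ℝ)) = 0 := by ext t; simp
        have h := ((key x hx).hasFDerivAt.hasFDerivWithinAt :
          HasFDerivWithinAt F ((1 : ℝ →L[ℝ] ℝ).smulRight 0) I x)
        simpa using h)
      (fun x _ => by simp) h0 hs
    simpa [sub_eq_zero] using hb
  have hF0 : F 0 = 0 := by
    simp only [hF, hy0, hy'0, hz0, hz'0]
    ring
  intro s hs
  have := hconst s hs
  rw [hF0] at this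
  simp only [hF] at this
  linarith
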